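/- Let G be a finite p-group with C_G(Φ(G)) ≤ Φ(G), and let H be the preimage in G of Ω₁(ζ₂(G)/ζ₁(G)). Then the square of the ring D = Der(G,H) is contained in Hom(G, Z(G)): for all δ₁, δ₂ ∈ D and x ∈ G, δ₂(δ₁(x)) defines a homomorphism into the center, i.e., every product of two derivations in D is a homomorphism from G to ζ(G). -/

import Mathlib

/-- A derivation from `G` into a set `S ⊆ G` (for the conjugation action). -/
def IsDerivationInto {G : Type*} [Group G] (S : Set G) (δ : G → G) : Prop :=
  (∀ x, δ x ∈ S) ∧ ∀ x y : G, δ (x * y) = y⁻¹ * δ x * y * δ y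


namespace DerAux

variable {G : Type*} [Group G]

lemma central_conj {z : G} (hz : z ∈ Subgroup.center G) (b : G) :
    b⁻¹ * z * b = z := by
  have h := Subgroup.mem_center_iff.mp hz b
  rw [mul_assoc, ← h, inv_mul_cancel_left]

lemma commute_of_comm_eq_one {a b : G} (e : a⁻¹ * b⁻¹ * a * b = 1) : a * b = b * a := by
  have h : a * b = (b * a) * (a⁻¹ * b⁻¹ * a * b) := by group
  rw [h, e, mul_one]

lemma comm_eq_one_of_commute {a b : G} (hab : a * b = b * a) : a⁻¹ * b⁻¹ * a * b = 1 := by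
  have h : a⁻¹ * b⁻¹ * a * b = a⁻¹ * b⁻¹ * (a * b) := by group
  rw [h, hab]; group

lemma comm_mem_center {h : G} (hh : h ∈ upperCentralSeries G 2) (g : G) :
    h⁻¹ * g⁻¹ * h * g ∈ Subgroup.center G := by
  have h1 : h * g⁻¹ * h⁻¹ * g⁻¹⁻¹ ∈ upperCentralSeries G 1 :=
    mem_upperCentralSeries_succ_iff.mp hh g⁻¹
  rw [show upperCentralSeries G 1 = Subgroup.center G from Subgroup.upperCentralSeries_one G] at h1
  rw [inv_inv] at h1
  have h2 : (h * g⁻¹ * h⁻¹ * g)⁻¹ ∈ Subgroup.center G := inv_mem h1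
  have key : h⁻¹ * g⁻¹ * h * g = h⁻¹ * (h * g⁻¹ * h⁻¹ * g)⁻¹ * h := by group
  rw [key, central_conj h2 h]
  exact h2

end DerAux

namespace DerAux2
open DerAux

variable {G : Type*} [Group G]

lemma comm_hom_right {h : G} (hh : h ∈ upperCentralSeries G 2) (g1 g2 : G) :
    h⁻¹ * (g1 * g2)⁻¹ * h * (g1 * g2) = (h⁻¹ * g1⁻¹ * h * g1) * (h⁻¹ * g2⁻¹ * h * g2) := by
  have hz1 : ∀ w : G, w * (h⁻¹ * g1⁻¹ * h * g1) = (h⁻¹ * g1⁻¹ * h * g1) * w :=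
    Subgroup.mem_center_iff.mp (comm_mem_center hh g1)
  calc h⁻¹ * (g1 * g2)⁻¹ * h * (g1 * g2)
      = h⁻¹ * g2⁻¹ * (h * (h⁻¹ * g1⁻¹ * h * g1)) * g2 := by group
    _ = h⁻¹ * g2⁻¹ * h * ((h⁻¹ * g1⁻¹ * h * g1) * g2) := by group
    _ = h⁻¹ * g2⁻¹ * h * (g2 * (h⁻¹ * g1⁻¹ * h * g1)) := by rw [← hz1 g2]
    _ = (h⁻¹ * g2⁻¹ * h * g2) * (h⁻¹ * g1⁻¹ * h * g1) := by group
    _ = (h⁻¹ * g1⁻¹ * h * g1) * (h⁻¹ * g2⁻¹ * h * g2) := (hz1 _)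

lemma comm_pow_left {h : G} (hh : h ∈ upperCentralSeries G 2) (g : G) (n : ℕ) :
    (h ^ n)⁻¹ * g⁻¹ * h ^ n * g = (h⁻¹ * g⁻¹ * h * g) ^ n := by
  induction n with
  | zero => simp
  | succ n ih =>
    have hn : h ^ n ∈ upperCentralSeries G 2 := pow_mem hh n
    have hz : ∀ w : G, w * ((h ^ n)⁻¹ * g⁻¹ * h ^ n * g) = ((h ^ n)⁻¹ * g⁻¹ * h ^ n * g) * w :=
      Subgroup.mem_center_iff.mp (comm_mem_center hn g)
    rw [pow_succ, pow_succ, ← ih]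
    calc (h ^ n * h)⁻¹ * g⁻¹ * (h ^ n * h) * g
        = h⁻¹ * ((h ^ n)⁻¹ * g⁻¹ * h ^ n * g) * (g⁻¹ * h * g) := by group
      _ = ((h ^ n)⁻¹ * g⁻¹ * h ^ n * g) * h⁻¹ * (g⁻¹ * h * g) := by rw [hz h⁻¹]
      _ = ((h ^ n)⁻¹ * g⁻¹ * h ^ n * g) * (h⁻¹ * g⁻¹ * h * g) := by group

end DerAux2

namespace DerAux3
open DerAux DerAux2 Pointwise

variable {G : Type*} [Group G]

lemma comm_orderp {p : ℕ} {h : G} (hh : h ∈ upperCentralSeries G 2)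
    (hhp : h ^ p ∈ Subgroup.center G) (g : G) :
    (h⁻¹ * g⁻¹ * h * g) ^ p = 1 := by
  rw [← comm_pow_left hh g p]
  have h2 : (h ^ p)⁻¹ * g⁻¹ * h ^ p * g = (h ^ p)⁻¹ * (g⁻¹ * h ^ p * g) := by group
  rw [h2, central_conj hhp g, inv_mul_cancel]

/-- If `K` contains all commutators and all `p`-th powers, then `frattini G ≤ K`. -/
lemma frattini_le_of_ker [Finite G] {p : ℕ} (hp : p.Prime) (K : Subgroup G)
    (hcomm : ∀ g1 g2 : G, g1⁻¹ * g2⁻¹ * g1 * g2 ∈ K) (hpow : ∀ g : G, g ^ p ∈ K) :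
    frattini G ≤ K := by
  intro x hx
  by_contra hxK
  obtain ⟨M, ⟨hKM, hxM⟩, hmax⟩ := Set.Finite.exists_maximalFor id
    {M : Subgroup G | K ≤ M ∧ x ∉ M} (Set.toFinite _) ⟨K, le_rfl, hxK⟩
  simp only [id] at hmax
  have hcommM : ∀ g1 g2 : G, g1⁻¹ * g2⁻¹ * g1 * g2 ∈ M := fun g1 g2 => hKM (hcomm g1 g2)
  have hpowM : ∀ g : G, g ^ p ∈ M := fun g => hKM (hpow g)
  have hnormal : M.Normal := by
    constructor
    intro n hn g
    have h1 : g⁻¹⁻¹ * n⁻¹⁻¹ * g⁻¹ * n⁻¹ ∈ M := hcommM g⁻¹ n⁻¹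
    rw [inv_inv, inv_inv] at h1
    have h2 : g * n * g⁻¹ = (g * n * g⁻¹ * n⁻¹) * n := by group
    rw [h2]; exact mul_mem h1 hn
  have hstep1 : ∀ g : G, g ∉ M → x ∈ M ⊔ Subgroup.zpowers g := by
    intro g hg
    by_contra hx'
    have heq : M = M ⊔ Subgroup.zpowers g :=
      le_antisymm le_sup_left (hmax ⟨le_trans hKM le_sup_left, hx'⟩ le_sup_left)
    have hgmem : g ∈ M ⊔ Subgroup.zpowers g := Subgroup.mem_sup_right (Subgroup.mem_zpowers g)
    rw [← heq] at hgmem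
    exact hg hgmem
  have hstep2 : ∀ g : G, g ∈ M ⊔ Subgroup.zpowers x := by
    intro g
    by_cases hg : g ∈ M
    · exact Subgroup.mem_sup_left hg
    have hx1 := hstep1 g hg
    have hset : (↑(M ⊔ Subgroup.zpowers g) : Set G) =
        (M : Set G) * (Subgroup.zpowers g : Set G) :=
      Subgroup.normal_mul _ _
    have hx2 : x ∈ ((M : Set G) * (Subgroup.zpowers g : Set G)) := by
      rw [← hset]; exact hx1
    obtain ⟨m, hm, t, ht, hmt⟩ := hx2
    rw [SetLike.mem_coe, Subgroup.mem_zpowers_iff] at ht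
    obtain ⟨k, rfl⟩ := ht
    rw [SetLike.mem_coe] at hm
    -- p does not divide k
    have hpk : ¬ (p : ℤ) ∣ k := by
      rintro ⟨t', rfl⟩
      apply hxM
      rw [← hmt]
      refine mul_mem hm ?_
      have he : g ^ ((p : ℤ) * t') = (g ^ p) ^ t' := by
        rw [zpow_mul, zpow_natCast]
      rw [he]
      exact zpow_mem (hpowM g) t'
    -- Bezout
    have hdvd : ¬ p ∣ k.natAbs := by
      intro hd
      obtain ⟨c, hc⟩ := hd
      apply hpk
      rcases Int.natAbs_eq k with he | he
      · exact ⟨c, by rw [he, hc]; push_cast; ring⟩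
      · exact ⟨-c, by rw [he, hc]; push_cast; ring⟩
    have hcop : Nat.Coprime p k.natAbs := (Nat.Prime.coprime_iff_not_dvd hp).mpr hdvd
    have hbez : (1 : ℤ) = p * Nat.gcdA p k.natAbs + k.natAbs * Nat.gcdB p k.natAbs := by
      have := Nat.gcd_eq_gcd_ab p k.natAbs
      rwa [hcop, Nat.cast_one] at this
    have hgk : g ^ k ∈ M ⊔ Subgroup.zpowers x := by
      have : g ^ k = m⁻¹ * x := by rw [← hmt]; group
      rw [this]
      exact mul_mem (Subgroup.mem_sup_left (inv_mem hm))
        (Subgroup.mem_sup_right (Subgroup.mem_zpowers x))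
    have hgabs : g ^ (k.natAbs : ℤ) ∈ M ⊔ Subgroup.zpowers x := by
      rcases Int.natAbs_eq k with he | he
      · rw [← he]; exact hgk
      · have : g ^ (k.natAbs : ℤ) = (g ^ k)⁻¹ := by
          rw [← zpow_neg]; congr 1; omega
        rw [this]; exact inv_mem hgk
    have hgp : g ^ (p : ℤ) ∈ M ⊔ Subgroup.zpowers x := by
      rw [zpow_natCast]; exact Subgroup.mem_sup_left (hpowM g)
    have hgeq : g = (g ^ (p : ℤ)) ^ Nat.gcdA p k.natAbs *
        (g ^ (k.natAbs : ℤ)) ^ Nat.gcdB p k.natAbs := by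
      rw [← zpow_mul, ← zpow_mul, ← zpow_add, ← hbez, zpow_one]
    rw [hgeq]
    exact mul_mem (zpow_mem hgp _) (zpow_mem hgabs _)
  have hcoatom : IsCoatom M := by
    constructor
    · intro htop
      exact hxM (htop ▸ Subgroup.mem_top x)
    · intro N hMN
      obtain ⟨g, hgN, hgM⟩ := SetLike.exists_of_lt hMN
      have hxN : x ∈ N := by
        have h1 := hstep1 g hgM
        have hle : M ⊔ Subgroup.zpowers g ≤ N :=
          sup_le hMN.le (Subgroup.zpowers_le.mpr hgN)
        exact hle h1
      have : (⊤ : Subgroup G) ≤ N := by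
        intro y _
        have h2 := hstep2 y
        have hle : M ⊔ Subgroup.zpowers x ≤ N :=
          sup_le hMN.le (Subgroup.zpowers_le.mpr hxN)
        exact hle h2
      exact top_unique this
  exact hxM (frattini_le_coatom hcoatom hx)

end DerAux3

namespace DerAux4
open DerAux DerAux2 DerAux3

variable {G : Type*} [Group G]

lemma centralizes_frattini [Finite G] {p : ℕ} (hp : p.Prime) {h : G}
    (hh : h ∈ upperCentralSeries G 2) (hhp : h ^ p ∈ Subgroup.center G) :
    ∀ f ∈ frattini G, h * f = f * h := by
  set φ : G →* G := MonoidHom.mk' (fun g => h⁻¹ * g⁻¹ * h * g) (comm_hom_right hh) with hφdef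
  have hφ : ∀ g : G, φ g = h⁻¹ * g⁻¹ * h * g := fun g => rfl
  have hmemc : ∀ g : G, φ g = 1 → g ∈ Subgroup.centralizer {h} := by
    intro g hg
    rw [Subgroup.mem_centralizer_iff]
    intro y hy
    rw [Set.mem_singleton_iff] at hy
    subst hy
    refine commute_of_comm_eq_one ?_
    rw [← hφ g]; exact hg
  have key : frattini G ≤ Subgroup.centralizer {h} := by
    apply frattini_le_of_ker hp
    · intro g1 g2
      apply hmemc
      have e : φ (g1⁻¹ * g2⁻¹ * g1 * g2) = (φ g1)⁻¹ * (φ g2)⁻¹ * φ g1 * φ g2 := by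
        rw [map_mul, map_mul, map_mul, map_inv, map_inv]
      rw [e]
      apply comm_eq_one_of_commute
      exact (Subgroup.mem_center_iff.mp (comm_mem_center hh g1) (φ g2)).symm
    · intro g
      apply hmemc
      rw [map_pow, hφ g]
      exact comm_orderp hh hhp g
  intro f hf
  exact Subgroup.mem_centralizer_iff.mp (key hf) h (Set.mem_singleton h)

end DerAux4

namespace DerAux5
open DerAux DerAux2 DerAux3 DerAux4

variable {G : Type*} [Group G]

lemma Hmem_frattini [Finite G] {p : ℕ} (hp : p.Prime)
    (hc : Subgroup.centralizer (frattini G : Set G) ≤ frattini G) {h : G}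
    (hh : h ∈ upperCentralSeries G 2) (hhp : h ^ p ∈ Subgroup.center G) :
    h ∈ frattini G := by
  apply hc
  rw [Subgroup.mem_centralizer_iff]
  intro f hf
  exact (centralizes_frattini hp hh hhp f hf).symm

lemma Hset_abelian [Finite G] {p : ℕ} (hp : p.Prime)
    (hc : Subgroup.centralizer (frattini G : Set G) ≤ frattini G) {a b : G}
    (ha : a ∈ upperCentralSeries G 2) (hap : a ^ p ∈ Subgroup.center G)
    (hb : b ∈ upperCentralSeries G 2) (hbp : b ^ p ∈ Subgroup.center G) :
    a * b = b * a :=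
  centralizes_frattini hp ha hap b (Hmem_frattini hp hc hb hbp)

section Derivation

variable {δ : G → G}

lemma der_one (hd : ∀ x y : G, δ (x * y) = y⁻¹ * δ x * y * δ y) : δ 1 = 1 := by
  have h := hd 1 1
  rw [mul_one, inv_one, one_mul, mul_one] at h
  -- h : δ 1 = δ 1 * δ 1
  have h2 : δ 1 * δ 1 = δ 1 * 1 := by rw [mul_one, ← h]
  exact mul_left_cancel h2

lemma der_inv (hd : ∀ x y : G, δ (x * y) = y⁻¹ * δ x * y * δ y) (g : G) :
    δ g⁻¹ = g * (δ g)⁻¹ * g⁻¹ := by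
  have h := hd g⁻¹ g
  rw [inv_mul_cancel, der_one hd] at h
  -- 1 = g⁻¹ * δ g⁻¹ * g * δ g
  have : δ g⁻¹ = g * (g⁻¹ * δ g⁻¹ * g * δ g) * (δ g)⁻¹ * g⁻¹ := by group
  rw [this, ← h]; group

end Derivation
end DerAux5

namespace DerAux6
open DerAux DerAux2 DerAux3 DerAux4 DerAux5

variable {G : Type*} [Group G] {δ : G → G} {p : ℕ}

lemma der_frattini_central [Finite G] (hp : p.Prime)
    (hc : Subgroup.centralizer (frattini G : Set G) ≤ frattini G)
    (hS1 : ∀ x : G, δ x ∈ upperCentralSeries G 2)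
    (hS2 : ∀ x : G, (δ x) ^ p ∈ Subgroup.center G)
    (hd : ∀ x y : G, δ (x * y) = y⁻¹ * δ x * y * δ y) :
    ∀ f ∈ frattini G, δ f ∈ Subgroup.center G := by
  set Z := Subgroup.center G with hZ
  have hmul : ∀ x y : G, (QuotientGroup.mk' Z) (δ (x * y)) =
      (QuotientGroup.mk' Z) (δ x) * (QuotientGroup.mk' Z) (δ y) := by
    intro x y
    have hz : (δ x)⁻¹ * y⁻¹ * δ x * y ∈ Z := comm_mem_center (hS1 x) y
    have he : δ (x * y) = δ x * (((δ x)⁻¹ * y⁻¹ * δ x * y) * δ y) := by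
      rw [hd x y]; group
    have h1 : (QuotientGroup.mk' Z) ((δ x)⁻¹ * y⁻¹ * δ x * y) = 1 :=
      (QuotientGroup.eq_one_iff _).mpr hz
    rw [he, map_mul, map_mul, h1, one_mul]
  set F : G →* G ⧸ Z := MonoidHom.mk' (fun g => (QuotientGroup.mk' Z) (δ g)) hmul with hF
  have hFval : ∀ g : G, F g = (QuotientGroup.mk' Z) (δ g) := fun g => rfl
  have hker : ∀ g : G, F g = 1 → δ g ∈ Z := by
    intro g hg
    rw [hFval] at hg
    exact (QuotientGroup.eq_one_iff _).mp hg
  have key : frattini G ≤ F.ker := by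
    apply frattini_le_of_ker hp
    · intro g1 g2
      rw [MonoidHom.mem_ker]
      have e : F (g1⁻¹ * g2⁻¹ * g1 * g2) = (F g1)⁻¹ * (F g2)⁻¹ * F g1 * F g2 := by
        rw [map_mul, map_mul, map_mul, map_inv, map_inv]
      rw [e]
      apply comm_eq_one_of_commute
      rw [hFval, hFval, ← map_mul, ← map_mul]
      congr 1
      exact Hset_abelian hp hc (hS1 g1) (hS2 g1) (hS1 g2) (hS2 g2)
    · intro g
      rw [MonoidHom.mem_ker, map_pow, hFval, ← map_pow]
      exact (QuotientGroup.eq_one_iff _).mpr (hS2 g)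
  intro f hf
  exact hker f (key hf)

end DerAux6


open DerAux DerAux2 DerAux3 DerAux4 DerAux5 DerAux6 in
/-- Let `G` be a finite `p`-group with `C_G(Φ(G)) ≤ Φ(G)` and `H` the preimage of
`Ω₁(ζ₂(G)/ζ₁(G))`, i.e. `H = {h ∈ ζ₂(G) : h^p ∈ ζ₁(G)}`. Then
`Der(G, H)² ⊆ Hom(G, ζ(G))`: the product `x ↦ δ₂(δ₁(x))` of any two derivations
`δ₁, δ₂ ∈ Der(G, H)` is a group homomorphism from `G` into the center. -/
theorem der_square_subset_hom_center {G : Type*} [Group G] [Finite G]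
    (p : ℕ) (hp : p.Prime) (hG : IsPGroup p G)
    (hc : Subgroup.centralizer (frattini G : Set G) ≤ frattini G) :
    ∀ δ₁ δ₂ : G → G,
      IsDerivationInto {h : G | h ∈ upperCentralSeries G 2 ∧ h ^ p ∈ Subgroup.center G} δ₁ →
      IsDerivationInto {h : G | h ∈ upperCentralSeries G 2 ∧ h ^ p ∈ Subgroup.center G} δ₂ →
      (∀ x : G, δ₂ (δ₁ x) ∈ Subgroup.center G) ∧
      (∀ x y : G, δ₂ (δ₁ (x * y)) = δ₂ (δ₁ x) * δ₂ (δ₁ y)) := by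
  intro δ₁ δ₂ hδ₁ hδ₂
  obtain ⟨hS₁, hd₁⟩ := hδ₁
  obtain ⟨hS₂, hd₂⟩ := hδ₂
  -- values of δ₂ on the Frattini subgroup are central
  have hD3 : ∀ f ∈ frattini G, δ₂ f ∈ Subgroup.center G :=
    der_frattini_central hp hc (fun x => (hS₂ x).1) (fun x => (hS₂ x).2) hd₂
  -- every element of H lies in the Frattini subgroup
  have hHfr : ∀ h : G, h ∈ upperCentralSeries G 2 → h ^ p ∈ Subgroup.center G →
      h ∈ frattini G := fun h hh hhp => Hmem_frattini hp hc hh hhp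
  have hcent : ∀ x : G, δ₂ (δ₁ x) ∈ Subgroup.center G := by
    intro x
    exact hD3 _ (hHfr _ (hS₁ x).1 (hS₁ x).2)
  refine ⟨hcent, ?_⟩
  intro x y
  -- Step A : δ₂ is invariant under conjugation of elements of H
  have stepA : ∀ a y : G, a ∈ upperCentralSeries G 2 → a ^ p ∈ Subgroup.center G →
      δ₂ (y⁻¹ * a * y) = δ₂ a := by
    intro a y ha hap
    have haF : a ∈ frattini G := hHfr a ha hap
    have hwc : δ₂ a ∈ Subgroup.center G := hD3 a haF
    have hw : ∀ g : G, g * δ₂ a = δ₂ a * g := Subgroup.mem_center_iff.mp hwc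
    -- conjugate of a is again in H
    have hb'2 : y⁻¹ * a * y ∈ upperCentralSeries G 2 := by
      have := Subgroup.Normal.conj_mem (inferInstance : (Subgroup.upperCentralSeries G 2).Normal) a ha y⁻¹
      simp at this; exact this
    have hb'p : (y⁻¹ * a * y) ^ p ∈ Subgroup.center G := by
      have hcj : (y⁻¹ * a * y) ^ p = y⁻¹ * a ^ p * y := by
        rw [show y⁻¹ * a * y = (MulAut.conj y⁻¹) a by simp [MulAut.conj_apply], ← map_pow]
        simp [MulAut.conj_apply]
      rw [hcj, central_conj hap y]
      exact hap
    -- u := δ₂ y is in H, so it commutes with y⁻¹*a*y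
    have hbu : (y⁻¹ * a * y) * δ₂ y = δ₂ y * (y⁻¹ * a * y) :=
      Hset_abelian hp hc hb'2 hb'p (hS₂ y).1 (hS₂ y).2
    have e1 : y⁻¹ * a * y = y⁻¹ * (a * y) := by group
    rw [e1, hd₂ y⁻¹ (a * y), der_inv hd₂ y, hd₂ a y]
    calc (a * y)⁻¹ * (y * (δ₂ y)⁻¹ * y⁻¹) * (a * y) * (y⁻¹ * δ₂ a * y * δ₂ y)
        = (y⁻¹ * a * y)⁻¹ * (δ₂ y)⁻¹ * (y⁻¹ * a * y) * (y⁻¹ * δ₂ a * y) * δ₂ y := by group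
      _ = (y⁻¹ * a * y)⁻¹ * (δ₂ y)⁻¹ * (y⁻¹ * a * y) * δ₂ a * δ₂ y := by
            rw [central_conj hwc y]
      _ = (y⁻¹ * a * y)⁻¹ * (δ₂ y)⁻¹ * (y⁻¹ * a * y) * (δ₂ a * δ₂ y) := by group
      _ = (y⁻¹ * a * y)⁻¹ * (δ₂ y)⁻¹ * (y⁻¹ * a * y) * (δ₂ y * δ₂ a) := by
            rw [hw (δ₂ y)]
      _ = (y⁻¹ * a * y)⁻¹ * (δ₂ y)⁻¹ * ((y⁻¹ * a * y) * δ₂ y) * δ₂ a := by group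
      _ = (y⁻¹ * a * y)⁻¹ * (δ₂ y)⁻¹ * (δ₂ y * (y⁻¹ * a * y)) * δ₂ a := by rw [hbu]
      _ = δ₂ a := by group
  -- main computation
  rw [hd₁ x y]
  rw [hd₂ (y⁻¹ * δ₁ x * y) (δ₁ y)]
  rw [stepA (δ₁ x) y (hS₁ x).1 (hS₁ x).2]
  have hc1 : δ₂ (δ₁ x) ∈ Subgroup.center G := hcent x
  calc (δ₁ y)⁻¹ * δ₂ (δ₁ x) * δ₁ y * δ₂ (δ₁ y)
      = δ₂ (δ₁ x) * δ₂ (δ₁ y) := by rw [central_conj hc1 (δ₁ y)]
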